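/- arXiv:1805.10084 — 2 statements merged into one kernel-verified Lean document; each statement's English description precedes it below -/
import Mathlib

section
/- For every integer k ≥ 1, the radio number of the middle graph M(P_{2k}) of the path P_{2k} is at least 4k² − 1, and for every integer k ≥ 1, the radio number of the middle graph M(P_{2k+1}) of the path P_{2k+1} is at least 4k(k+1). -/
/-- The middle graph `M(P n)` of the path `P n`: vertices are
`v 1, …, v n` (encoded as even indices `0, 2, …, 2n-2`) together with
`v' 1, …, v' (n-1)` (encoded as odd indices `1, 3, …, 2n-3`), where
`v' i` corresponds to the edge `e i = v i v (i+1)`.  Two vertices are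
adjacent iff their indices differ by `1` (i.e. `v' i` is adjacent to
`v i` and `v (i+1)`), or they are both odd and differ by `2`
(i.e. `v' i` is adjacent to `v' (i+1)`). -/
def middlePath (n : ℕ) : SimpleGraph (Fin (2 * n - 1)) where
  Adj a b := ((a : ℕ) + 1 = (b : ℕ) ∨ (b : ℕ) + 1 = (a : ℕ)) ∨
    ((a : ℕ) % 2 = 1 ∧ (b : ℕ) % 2 = 1 ∧
      ((a : ℕ) + 2 = (b : ℕ) ∨ (b : ℕ) + 2 = (a : ℕ)))
  symm := ⟨by intro a b h; tauto⟩
  loopless := ⟨by intro a h; rcases h with (h | h) | ⟨-, -, h | h⟩ <;> omega⟩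

/-- `φ` is a radio labeling of `G`: distinct vertices `u, v` satisfy
`|φ u - φ v| ≥ diam G + 1 - d(u, v)`. -/
def IsRadioLabeling {V : Type*} (G : SimpleGraph V) (φ : V → ℕ) : Prop :=
  ∀ u v : V, u ≠ v → (G.diam : ℤ) + 1 ≤ (G.dist u v : ℤ) + |(φ u : ℤ) - (φ v : ℤ)|

/-- The span of a labeling `φ`: the maximum of `|φ u - φ v|` over all pairs. -/
def labelSpan {V : Type*} [Fintype V] (φ : V → ℕ) : ℕ :=
  Finset.univ.sup fun p : V × V => ((φ p.1 : ℤ) - (φ p.2 : ℤ)).natAbs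

/-- The radio number of `G`: the minimum span over all radio labelings. -/
noncomputable def radioNumber {V : Type*} [Fintype V] (G : SimpleGraph V) : ℕ :=
  sInf {s | ∃ φ : V → ℕ, IsRadioLabeling G φ ∧ labelSpan φ = s}

lemma mp_adj_succ {n : ℕ} (a b : Fin (2 * n - 1)) (h : (a : ℕ) + 1 = (b : ℕ)) :
    (middlePath n).Adj a b := Or.inl (Or.inl h)

lemma mp_adj_two {n : ℕ} (a b : Fin (2 * n - 1)) (ha : (a : ℕ) % 2 = 1)
    (h : (a : ℕ) + 2 = (b : ℕ)) : (middlePath n).Adj a b :=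
  Or.inr ⟨ha, by omega, Or.inl h⟩

lemma mp_reach_zero {n : ℕ} (hn : 1 ≤ n) (a : Fin (2 * n - 1)) :
    (middlePath n).Reachable ⟨0, by omega⟩ a := by
  obtain ⟨a, ha⟩ := a
  induction a with
  | zero => exact SimpleGraph.Reachable.refl _
  | succ m ih =>
    exact (ih (by omega)).trans (SimpleGraph.Adj.reachable (mp_adj_succ ⟨m, by omega⟩ ⟨m+1, ha⟩ rfl))

lemma mp_connected {n : ℕ} (hn : 1 ≤ n) : (middlePath n).Connected := by
  rw [SimpleGraph.connected_iff]
  refine ⟨fun u v => (mp_reach_zero hn u).symm.trans (mp_reach_zero hn v), ⟨⟨0, by omega⟩⟩⟩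

lemma mp_ediam_ne_top {n : ℕ} (hn : 1 ≤ n) : (middlePath n).ediam ≠ ⊤ := by
  have : Nonempty (Fin (2*n-1)) := ⟨⟨0, by omega⟩⟩
  obtain ⟨u, v, huv⟩ := SimpleGraph.exists_edist_eq_ediam_of_finite (G := middlePath n)
  rw [← huv]
  exact SimpleGraph.edist_ne_top_iff_reachable.mpr ((mp_connected hn) u v)

lemma mp_dist_le_aux {n : ℕ} (hn : 1 ≤ n) (m : ℕ) : ∀ a b : Fin (2*n-1), (a:ℕ) ≤ b →
    (b:ℕ) - a = m →
    2 * (middlePath n).dist a b ≤ ((b:ℕ) - a) + (1 - (a:ℕ)%2) + (1 - (b:ℕ)%2) := by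
  induction m using Nat.strong_induction_on with
  | _ m ih =>
    intro a b hab hm
    have hbl : (b:ℕ) < 2*n-1 := b.isLt
    by_cases h0 : (b:ℕ) = a
    · have : a = b := Fin.ext h0.symm
      subst this
      simp [SimpleGraph.dist_self]
    by_cases h1 : (b:ℕ) = a + 1
    · have hadj : (middlePath n).Adj a b := mp_adj_succ a b h1.symm
      have hd : (middlePath n).dist a b = 1 := SimpleGraph.dist_eq_one_iff_adj.mpr hadj
      rw [hd]; omega
    -- now b ≥ a + 2
    have hge : (a:ℕ) + 2 ≤ b := by omega
    rcases Nat.even_or_odd (a:ℕ) with he | ho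
    · -- a even : step to a+1
      have he' : (a:ℕ) % 2 = 0 := Nat.even_iff.mp he
      set a' : Fin (2*n-1) := ⟨(a:ℕ)+1, by omega⟩ with ha'
      have hadj : (middlePath n).Adj a a' := mp_adj_succ a a' rfl
      have hih := ih (m-1) (by omega) a' b (by simp [ha']; omega) (by simp [ha']; omega)
      have htri : (middlePath n).dist a b ≤ (middlePath n).dist a a' + (middlePath n).dist a' b :=
        (mp_connected hn).dist_triangle
      have hd1 : (middlePath n).dist a a' = 1 := SimpleGraph.dist_eq_one_iff_adj.mpr hadj
      have hval : (a' : ℕ) = (a:ℕ) + 1 := rfl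
      rw [hval] at hih
      omega
    · -- a odd : step to a+2
      have ho' : (a:ℕ) % 2 = 1 := Nat.odd_iff.mp ho
      set a' : Fin (2*n-1) := ⟨(a:ℕ)+2, by omega⟩ with ha'
      have hadj : (middlePath n).Adj a a' := mp_adj_two a a' ho' rfl
      have hih := ih (m-2) (by omega) a' b (by simp [ha']; omega) (by simp [ha']; omega)
      have htri : (middlePath n).dist a b ≤ (middlePath n).dist a a' + (middlePath n).dist a' b :=
        (mp_connected hn).dist_triangle
      have hd1 : (middlePath n).dist a a' = 1 := SimpleGraph.dist_eq_one_iff_adj.mpr hadj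
      have hval : (a' : ℕ) = (a:ℕ) + 2 := rfl
      rw [hval] at hih
      omega

lemma mp_dist_le {n : ℕ} (hn : 1 ≤ n) (a b : Fin (2*n-1)) :
    2 * (middlePath n).dist a b ≤
      (max (a:ℕ) b - min (a:ℕ) b) + (1 - (a:ℕ)%2) + (1 - (b:ℕ)%2) := by
  rcases le_total (a:ℕ) (b:ℕ) with h | h
  · have := mp_dist_le_aux hn ((b:ℕ) - a) a b h rfl
    omega
  · have := mp_dist_le_aux hn ((a:ℕ) - b) b a h rfl
    rw [SimpleGraph.dist_comm] at this
    omega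

/-- potential: distance from vertex 0 -/
def mpw (a : ℕ) : ℤ := if a = 0 then 0 else ((a : ℤ) + 2 - (a : ℤ) % 2) / 2

lemma mpw_adj {n : ℕ} (a b : Fin (2*n-1)) (h : (middlePath n).Adj a b) :
    |mpw a - mpw b| ≤ 1 := by
  have h' : (((a:ℕ) + 1 = (b : ℕ) ∨ (b : ℕ) + 1 = (a : ℕ)) ∨
    ((a : ℕ) % 2 = 1 ∧ (b : ℕ) % 2 = 1 ∧
      ((a : ℕ) + 2 = (b : ℕ) ∨ (b : ℕ) + 2 = (a : ℕ)))) := h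
  unfold mpw
  rw [abs_le]
  have ha : ((a:ℕ) : ℤ) % 2 = ((a:ℕ) % 2 : ℕ) := by omega
  split_ifs <;> omega

lemma mpw_walk_le {n : ℕ} {a b : Fin (2*n-1)} (p : (middlePath n).Walk a b) :
    |mpw a - mpw b| ≤ (p.length : ℤ) := by
  induction p with
  | nil => simp
  | cons h q ih =>
    rename_i u v w
    have h1 := mpw_adj _ _ h
    have : |mpw u - mpw w| ≤ |mpw u - mpw v| + |mpw v - mpw w| := abs_sub_le _ _ _
    simp only [SimpleGraph.Walk.length_cons]
    push_cast
    omega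

lemma mp_diam_ge {n : ℕ} (hn : 2 ≤ n) : (n : ℕ) ≤ (middlePath n).diam := by
  set u : Fin (2*n-1) := ⟨0, by omega⟩
  set v : Fin (2*n-1) := ⟨2*n-2, by omega⟩
  have hr : (middlePath n).Reachable u v := (mp_connected (by omega)) u v
  obtain ⟨p, hp⟩ := hr.exists_walk_length_eq_dist
  have h1 : |mpw u - mpw v| ≤ (p.length : ℤ) := mpw_walk_le p
  have hu : mpw (u:ℕ) = 0 := by simp [mpw, u]
  have hv : mpw (v:ℕ) = n := by
    show mpw (2*n-2) = n
    unfold mpw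
    have h2 : ¬ (2*n-2 = 0) := by omega
    rw [if_neg h2]
    omega
  have hd : (n:ℕ) ≤ (middlePath n).dist u v := by
    rw [← hp] at *
    rw [hu, hv] at h1
    simp at h1
    exact_mod_cast h1
  calc (n:ℕ) ≤ (middlePath n).dist u v := hd
    _ ≤ (middlePath n).diam := SimpleGraph.dist_le_diam (mp_ediam_ne_top (by omega))

lemma sum_eps (M : ℕ) : ∑ v ∈ Finset.range M, (1 - v % 2) = (M + 1) / 2 := by
  induction M with
  | zero => simp
  | succ m ih => rw [Finset.sum_range_succ, ih]; omega

lemma sum_dAbs (c : ℕ) :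
    ∑ v ∈ Finset.range (2*c+1), (max v c - min v c) = c * (c + 1) := by
  induction c with
  | zero => simp
  | succ c ih =>
    have h1 : 2*(c+1)+1 = (2*c+2) + 1 := by ring
    rw [h1, Finset.sum_range_succ' (fun v => max v (c+1) - min v (c+1))]
    have h2 : ∀ i ∈ Finset.range (2*c+2), (max (i+1) (c+1) - min (i+1) (c+1))
        = max i c - min i c := by intro i _; omega
    rw [Finset.sum_congr rfl h2, Finset.sum_range_succ, ih]
    have h3 : max (2*c+1) c - min (2*c+1) c = c + 1 := by omega
    have h4 : max 0 (c+1) - min 0 (c+1) = c + 1 := by omega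
    have h5 : (c+1) * (c+1+1) = c*(c+1) + 2*(c+1) := by ring
    omega


lemma pair_ge_two (a b c : ℕ) (hab : a ≠ b) :
    2 ≤ (max a c - min a c + (1 - a % 2)) + (max b c - min b c + (1 - b % 2)) := by
  omega

theorem mp_main (n : ℕ) (hn : 2 ≤ n) : n ^ 2 - 1 ≤ radioNumber (middlePath n) := by
  have hn1 : 1 ≤ n := by omega
  set G := middlePath n with hG
  have hconn := mp_connected (n := n) hn1
  have hnetop := mp_ediam_ne_top (n := n) hn1
  have hdiam : (n : ℕ) ≤ G.diam := mp_diam_ge hn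
  -- the set of spans is nonempty
  have hne : {s | ∃ φ : Fin (2*n-1) → ℕ, IsRadioLabeling G φ ∧ labelSpan φ = s}.Nonempty := by
    refine ⟨labelSpan (fun v : Fin (2*n-1) => (v : ℕ) * (G.diam + 1)),
      fun v => (v : ℕ) * (G.diam + 1), ?_, rfl⟩
    intro u v huv
    have hne' : (u : ℕ) ≠ (v : ℕ) := fun h => huv (Fin.ext h)
    have h1 : ((G.diam : ℤ) + 1) ≤ |((u:ℕ) * (G.diam + 1) : ℤ) - ((v:ℕ) * (G.diam + 1) : ℤ)| := by
      have : (((u:ℕ):ℤ) * (G.diam + 1) : ℤ) - ((v:ℕ) * (G.diam + 1)) =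
          (((u:ℕ):ℤ) - (v:ℕ)) * (G.diam + 1) := by ring
      rw [this, abs_mul]
      have h2 : 1 ≤ |((u:ℕ):ℤ) - ((v:ℕ):ℤ)| := by
        rcases Nat.lt_or_ge (u:ℕ) (v:ℕ) with h | h
        · rw [abs_sub_comm]; rw [abs_of_nonneg (by omega)]; omega
        · rw [abs_of_nonneg (by omega)]; omega
      have h3 : (0:ℤ) ≤ |((G.diam:ℤ) + 1)| := abs_nonneg _
      have h4 : |((G.diam:ℤ) + 1)| = (G.diam:ℤ) + 1 := abs_of_nonneg (by positivity)
      nlinarith [abs_nonneg (((u:ℕ):ℤ) - ((v:ℕ):ℤ))]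
    have h0 : (0:ℤ) ≤ (G.dist u v : ℤ) := by positivity
    beta_reduce
    push_cast at h1 ⊢
    omega
  refine le_csInf hne ?_
  rintro s ⟨φ, hrad, rfl⟩
  -- φ is injective
  have hinj : Function.Injective φ := by
    intro u v huv
    by_contra hne'
    have h1 := hrad u v hne'
    rw [huv] at h1
    simp only [sub_self, abs_zero, add_zero] at h1
    have h2 : G.dist u v ≤ G.diam := SimpleGraph.dist_le_diam hnetop
    omega
  -- order the vertices by label
  set m : ℕ := 2*n - 2 with hm
  have hM : 2*n - 1 = m + 1 := by omega
  set s := Finset.image φ Finset.univ with hs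
  have hcard' : s.card = m + 1 := by
    rw [hs, Finset.card_image_of_injective _ hinj, Finset.card_univ, Fintype.card_fin]
    omega
  set e := s.orderIsoOfFin hcard' with he
  have hex : ∀ i : Fin (m+1), ∃ v : Fin (2*n-1), φ v = (e i : ℕ) := by
    intro i
    obtain ⟨v, -, hv⟩ := Finset.mem_image.mp
      (show ((e i : ℕ)) ∈ Finset.image φ Finset.univ from Finset.coe_mem (e i))
    exact ⟨v, hv⟩
  choose σ hσ using hex
  have hmono : ∀ i j : Fin (m+1), i < j → φ (σ i) < φ (σ j) := by
    intro i j hij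
    rw [hσ, hσ]
    exact_mod_cast e.strictMono hij
  have hσinj : Function.Injective σ := by
    intro i j hij
    have h1 : φ (σ i) = φ (σ j) := by rw [hij]
    rw [hσ, hσ] at h1
    exact e.injective (Subtype.ext h1)
  have hσbij : Function.Bijective σ := by
    have hcardeq : Fintype.card (Fin (m+1)) = Fintype.card (Fin (2*n-1)) := by
      simp [hM]
    exact (Fintype.bijective_iff_injective_and_card σ).mpr ⟨hσinj, hcardeq⟩
  set σ' : ℕ → Fin (2*n-1) := fun i => σ ⟨min i m, by omega⟩ with hσ'
  have hσ'eq : ∀ i : Fin (m+1), σ' (i : ℕ) = σ i := by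
    intro i
    exact congrArg σ (Fin.ext (by simp; omega))
  -- gap inequality
  have hgap : ∀ i < m, ((n:ℤ) + 1) - (G.dist (σ' i) (σ' (i+1)) : ℤ) ≤
      (φ (σ' (i+1)) : ℤ) - (φ (σ' i) : ℤ) := by
    intro i hi
    have hlt : (⟨min i m, by omega⟩ : Fin (m+1)) < ⟨min (i+1) m, by omega⟩ := by
      simp [Fin.lt_def]; omega
    have hneq : σ' i ≠ σ' (i+1) := by
      intro hcontra
      exact absurd (hσinj hcontra) (by simp [Fin.ext_iff]; omega)
    have h1 := hrad (σ' i) (σ' (i+1)) hneq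
    have h2 : φ (σ' i) < φ (σ' (i+1)) := hmono _ _ hlt
    have h3 : |(φ (σ' i) : ℤ) - (φ (σ' (i+1)) : ℤ)| =
        (φ (σ' (i+1)) : ℤ) - (φ (σ' i) : ℤ) := by
      rw [abs_sub_comm, abs_of_nonneg]; omega
    rw [h3] at h1
    have h4 : (n : ℤ) ≤ (G.diam : ℤ) := by exact_mod_cast hdiam
    omega
  -- bound on the sum of distances
  set c : ℕ := n - 1 with hc
  set h : Fin (2*n-1) → ℕ := fun v => (max (v:ℕ) c - min (v:ℕ) c) + (1 - (v:ℕ) % 2) with hh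
  have hdist2 : ∀ i < m, 2 * G.dist (σ' i) (σ' (i+1)) ≤ h (σ' i) + h (σ' (i+1)) := by
    intro i hi
    have h1 := mp_dist_le hn1 (σ' i) (σ' (i+1))
    rw [← hG] at h1
    simp only [hh]
    omega
  have htot : ∑ v : Fin (2*n-1), h v = n ^ 2 := by
    have h1 : ∑ v : Fin (2*n-1), h v =
        ∑ v ∈ Finset.range (2*n-1), ((max v c - min v c) + (1 - v % 2)) := by
      rw [Finset.sum_range fun i => (max i c - min i c) + (1 - i % 2)]
    rw [h1, Finset.sum_add_distrib]
    have h2 : 2*n-1 = 2*c+1 := by omega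
    rw [h2, sum_dAbs, sum_eps]
    have h3 : (2*c+1+1)/2 = c+1 := by omega
    have h4 : n ^ 2 = c*(c+1) + (c+1) := by
      have h5 : n = c + 1 := by omega
      rw [h5]; ring
    omega
  have hsumσ : ∑ i ∈ Finset.range (m+1), h (σ' i) = n ^ 2 := by
    rw [Finset.sum_range fun i => h (σ' i)]
    have h1 : ∀ i : Fin (m+1), h (σ' (i:ℕ)) = h (σ i) := fun i => by rw [hσ'eq]
    rw [Fintype.sum_congr _ _ h1, ← htot]
    exact Fintype.sum_bijective σ hσbij _ _ (fun i => rfl)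
  set S : ℕ := ∑ i ∈ Finset.range m, G.dist (σ' i) (σ' (i+1)) with hS
  have hSle : 2 * S ≤ 2 * n ^ 2 - 2 := by
    have h1 : 2 * S ≤ ∑ i ∈ Finset.range m, (h (σ' i) + h (σ' (i+1))) := by
      rw [hS, Finset.mul_sum]
      exact Finset.sum_le_sum fun i hi => hdist2 i (Finset.mem_range.mp hi)
    rw [Finset.sum_add_distrib] at h1
    have hA := Finset.sum_range_succ (fun i => h (σ' i)) m
    have hB := Finset.sum_range_succ' (fun i => h (σ' i)) m
    beta_reduce at hA hB
    have hne0m : σ' 0 ≠ σ' m := by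
      intro hcontra
      exact absurd (hσinj hcontra) (by simp [Fin.ext_iff]; omega)
    have h4 : 2 ≤ h (σ' 0) + h (σ' m) := by
      have hv : ((σ' 0 : Fin (2*n-1)) : ℕ) ≠ ((σ' m : Fin (2*n-1)) : ℕ) :=
        fun hval => hne0m (Fin.ext hval)
      have := pair_ge_two (σ' 0 : ℕ) (σ' m : ℕ) c hv
      simp only [hh]
      omega
    omega
  -- telescoping
  have htel : ((m : ℤ)) * ((n:ℤ) + 1) - (S : ℤ) ≤ (φ (σ' m) : ℤ) - (φ (σ' 0) : ℤ) := by
    have h1 : ∑ i ∈ Finset.range m, ((φ (σ' (i+1)) : ℤ) - (φ (σ' i) : ℤ)) =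
        (φ (σ' m) : ℤ) - (φ (σ' 0) : ℤ) :=
      Finset.sum_range_sub (fun i => (φ (σ' i) : ℤ)) m
    have h2 : ∑ i ∈ Finset.range m, (((n:ℤ) + 1) - (G.dist (σ' i) (σ' (i+1)) : ℤ)) ≤
        ∑ i ∈ Finset.range m, ((φ (σ' (i+1)) : ℤ) - (φ (σ' i) : ℤ)) :=
      Finset.sum_le_sum fun i hi => hgap i (Finset.mem_range.mp hi)
    rw [h1] at h2
    have h3 : ∑ i ∈ Finset.range m, (((n:ℤ) + 1) - (G.dist (σ' i) (σ' (i+1)) : ℤ)) =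
        (m : ℤ) * ((n:ℤ) + 1) - (S : ℤ) := by
      rw [Finset.sum_sub_distrib, Finset.sum_const, Finset.card_range, hS]
      push_cast
      ring
    omega
  -- conclude
  have hn2 : 1 ≤ n ^ 2 := Nat.one_le_pow _ _ (by omega)
  have hfin : ((n ^ 2 - 1 : ℕ) : ℤ) ≤ (φ (σ' m) : ℤ) - (φ (σ' 0) : ℤ) := by
    have hSn : S ≤ n ^ 2 - 1 := by omega
    have hS' : (S : ℤ) ≤ ((n:ℤ) * n) - 1 := by
      calc (S : ℤ) ≤ ((n^2 - 1 : ℕ) : ℤ) := by exact_mod_cast hSn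
        _ = (n:ℤ) * n - 1 := by rw [Nat.cast_sub hn2]; push_cast; ring
    have hm' : (m : ℤ) = 2*(n:ℤ) - 2 := by
      rw [hm, Nat.cast_sub (by omega)]; push_cast; ring
    have hexp : (m:ℤ) * ((n:ℤ)+1) = 2*((n:ℤ)*(n:ℤ)) + 2*(n:ℤ) - 2*(n:ℤ) - 2 := by
      rw [hm']; ring
    have hgoal : ((n ^ 2 - 1 : ℕ) : ℤ) = (n:ℤ)*n - 1 := by
      rw [Nat.cast_sub hn2]; push_cast; ring
    rw [hgoal]
    linarith [htel]
  have hsup : ((φ (σ' m) : ℤ) - (φ (σ' 0) : ℤ)).natAbs ≤ labelSpan φ :=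
    Finset.le_sup (f := fun p : (Fin (2*n-1)) × (Fin (2*n-1)) =>
      ((φ p.1 : ℤ) - (φ p.2 : ℤ)).natAbs) (Finset.mem_univ (σ' m, σ' 0))
  have habs : ((n^2-1:ℕ):ℤ) ≤ ((((φ (σ' m) : ℤ) - (φ (σ' 0) : ℤ)).natAbs : ℕ) : ℤ) :=
    le_trans hfin (Int.le_natAbs)
  have habs' : n^2 - 1 ≤ (((φ (σ' m) : ℤ) - (φ (σ' 0) : ℤ)).natAbs : ℕ) := by
    exact_mod_cast habs
  exact le_trans habs' hsup

/-- For every `k ≥ 1`, the radio number of the middle graph of the path `P (2k)`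
is at least `4k² - 1`, and the radio number of the middle graph of `P (2k+1)` is
at least `4k(k+1)`. -/
theorem radioNumber_middlePath_lower (k : ℕ) (hk : 1 ≤ k) :
    4 * k ^ 2 - 1 ≤ radioNumber (middlePath (2 * k)) ∧
    4 * k * (k + 1) ≤ radioNumber (middlePath (2 * k + 1)) := by
  constructor
  · have h1 := mp_main (2*k) (by omega)
    have h2 : (2*k)^2 = 4*k^2 := by ring
    omega
  · have h1 := mp_main (2*k+1) (by omega)
    have h2 : (2*k+1)^2 = 4*k*(k+1) + 1 := by ring
    omega
end

section
/- Let n ≥ 2, let d = diam(M(P_n)) and k = ⌊n/2⌋, and let p = 2n − 1 be the number of vertices of M(P_n). Let u_1, u_2, …, u_p be an ordering of all vertices of M(P_n) and let φ be defined by φ(u_1) = 0 and φ(u_{i+1}) = φ(u_i) + d + 1 − d(u_i, u_{i+1}) for 1 ≤ i ≤ p − 1. If d(u_i, u_{i+1}) ≤ k + 1 for every 1 ≤ i ≤ p − 1, then φ is a radio labeling of M(P_n). -/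
namespace RadioAux

def F (n : ℕ) (a : Fin (2 * n - 1)) : ℤ :=
  if (a : ℕ) = 0 then 0 else if (a : ℕ) = 2 * n - 2 then 2 * n else (a : ℕ) + 1

lemma adj_F {n : ℕ} (hn : 2 ≤ n) {a b : Fin (2 * n - 1)}
    (h : (middlePath n).Adj a b) : F n b ≤ F n a + 2 := by
  have ha := a.isLt; have hb := b.isLt
  rcases h with (h | h) | ⟨h1, h2, h | h⟩ <;> unfold F <;> split_ifs <;> omega

lemma walk_bound {n : ℕ} (hn : 2 ≤ n) {a b : Fin (2 * n - 1)}
    (w : (middlePath n).Walk a b) : F n b ≤ F n a + 2 * w.length := by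
  induction w with
  | nil => simp
  | @cons a c b h p ih =>
    have h2 := adj_F hn h
    rw [SimpleGraph.Walk.length_cons]
    push_cast
    omega

lemma connected {n : ℕ} (hn : 2 ≤ n) : (middlePath n).Connected := by
  have hp : 0 < 2 * n - 1 := by omega
  rw [SimpleGraph.connected_iff]
  have key : ∀ m (hm : m < 2 * n - 1),
      (middlePath n).Reachable ⟨0, hp⟩ ⟨m, hm⟩ := by
    intro m
    induction m with
    | zero => intro hm; exact SimpleGraph.Reachable.refl _
    | succ k ih =>
      intro hm
      have hk : k < 2 * n - 1 := by omega
      exact (ih hk).trans (SimpleGraph.Adj.reachable (Or.inl (Or.inl rfl)))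
  refine ⟨fun x y => ?_, ⟨⟨0, hp⟩⟩⟩
  exact (key x.val x.isLt).symm.trans (key y.val y.isLt)

lemma ediam_ne_top {n : ℕ} (hn : 2 ≤ n) : (middlePath n).ediam ≠ ⊤ := by
  have : (0 : ℕ) < 2 * n - 1 := by omega
  haveI : Nonempty (Fin (2 * n - 1)) := ⟨⟨0, this⟩⟩
  obtain ⟨a, b, hab⟩ := SimpleGraph.exists_edist_eq_ediam_of_finite (G := middlePath n)
  rw [← hab]
  exact SimpleGraph.edist_ne_top_iff_reachable.mpr ((connected hn) a b)

lemma n_le_diam {n : ℕ} (hn : 2 ≤ n) : n ≤ (middlePath n).diam := by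
  have h0 : (0 : ℕ) < 2 * n - 1 := by omega
  have htop : 2 * n - 2 < 2 * n - 1 := by omega
  set a : Fin (2 * n - 1) := ⟨0, h0⟩
  set b : Fin (2 * n - 1) := ⟨2 * n - 2, htop⟩
  have hr : (middlePath n).Reachable a b := (connected hn) a b
  obtain ⟨w, hw⟩ := hr.exists_walk_length_eq_dist
  have hb := walk_bound hn w
  have hFa : F n a = 0 := by simp [F, a]
  have hFb : F n b = 2 * n := by
    have : (b : ℕ) = 2 * n - 2 := rfl
    unfold F
    split_ifs <;> omega
  have hdist : n ≤ (middlePath n).dist a b := by omega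
  exact le_trans hdist (SimpleGraph.dist_le_diam (ediam_ne_top hn))

end RadioAux

/-- Let `u 0, u 1, …, u (p-1)` be an ordering of all `p = 2n - 1` vertices of
`M(P n)` and let `φ` be defined by `φ (u 0) = 0` and
`φ (u (i+1)) = φ (u i) + diam + 1 - d(u i, u (i+1))`.  If `d(u i, u (i+1)) ≤ k + 1`
for every `i`, where `k = ⌊n/2⌋`, then `φ` is a radio labeling of `M(P n)`. -/
theorem isRadioLabeling_of_consecutive_dist_le (n : ℕ) (hn : 2 ≤ n)
    (u : Fin (2 * n - 1) → Fin (2 * n - 1)) (hu : Function.Bijective u)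
    (φ : Fin (2 * n - 1) → ℕ)
    (h0 : φ (u ⟨0, by omega⟩) = 0)
    (hstep : ∀ i j : Fin (2 * n - 1), (j : ℕ) = (i : ℕ) + 1 →
      φ (u j) = φ (u i) + ((middlePath n).diam + 1 - (middlePath n).dist (u i) (u j)))
    (hdist : ∀ i j : Fin (2 * n - 1), (j : ℕ) = (i : ℕ) + 1 →
      (middlePath n).dist (u i) (u j) ≤ n / 2 + 1) :
    IsRadioLabeling (middlePath n) φ := by
  intro x y hxy
  set G := middlePath n with hG
  set d := G.diam with hdset
  have hd : n ≤ d := RadioAux.n_le_diam hn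
  have hconn : G.Connected := RadioAux.connected hn
  -- each consecutive step increases φ by at least d - n/2
  have step : ∀ i j : Fin (2 * n - 1), (j : ℕ) = (i : ℕ) + 1 →
      φ (u i) + (d - n / 2) ≤ φ (u j) := by
    intro i j hij
    have h1 := hdist i j hij
    have h2 := hstep i j hij
    omega
  have mono : ∀ b (hb : b < 2 * n - 1), ∀ a (hab : a < b),
      φ (u ⟨a, by omega⟩) + (d - n / 2) ≤ φ (u ⟨b, hb⟩) := by
    intro b
    induction b with
    | zero => omega
    | succ c ih =>
      intro hb a hab
      have hc : c < 2 * n - 1 := by omega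
      have hs := step ⟨c, hc⟩ ⟨c + 1, hb⟩ rfl
      rcases Nat.lt_or_ge a c with h | h
      · have := ih hc a h
        omega
      · have : a = c := by omega
        subst this
        exact hs
  -- the goal is symmetric; prove it for i < j
  have main : ∀ i j : Fin (2 * n - 1), (i : ℕ) < (j : ℕ) →
      (d : ℤ) + 1 ≤ (G.dist (u i) (u j) : ℤ) +
        |(φ (u i) : ℤ) - (φ (u j) : ℤ)| := by
    intro i j hij
    have hne : u i ≠ u j := fun h => by
      have := hu.injective h
      subst this
      exact lt_irrefl _ hij
    have hpos : 0 < G.dist (u i) (u j) := hconn.pos_dist_of_ne hne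
    have habs : (φ (u j) : ℤ) - (φ (u i) : ℤ) ≤
        |(φ (u i) : ℤ) - (φ (u j) : ℤ)| := by
      rw [abs_sub_comm]; exact le_abs_self _
    rcases Nat.lt_or_ge (i : ℕ) ((j : ℕ) - 1) with h2 | h2
    · -- j ≥ i + 2 : use two steps of mono
      have hj2 : (i : ℕ) + 2 ≤ (j : ℕ) := by omega
      have hi1 : (i : ℕ) + 1 < 2 * n - 1 := by omega
      have h1 := step i ⟨(i : ℕ) + 1, hi1⟩ rfl
      have h3 := mono (j : ℕ) j.isLt ((i : ℕ) + 1) (by omega)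
      simp only [Fin.eta] at h1 h3
      have hgoal : (d : ℤ) + 1 ≤ (G.dist (u i) (u j) : ℤ) +
          ((φ (u j) : ℤ) - (φ (u i) : ℤ)) := by
        have hnk : n / 2 + n / 2 ≤ n := by omega
        omega
      calc (d : ℤ) + 1 ≤ _ := hgoal
        _ ≤ _ := by exact add_le_add_right habs _
    · -- j = i + 1 : exact step equation
      have hij1 : (j : ℕ) = (i : ℕ) + 1 := by omega
      have h1 := hstep i j hij1
      have h2 := hdist i j hij1
      have hgoal : (d : ℤ) + 1 ≤ (G.dist (u i) (u j) : ℤ) +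
          ((φ (u j) : ℤ) - (φ (u i) : ℤ)) := by omega
      calc (d : ℤ) + 1 ≤ _ := hgoal
        _ ≤ _ := by exact add_le_add_right habs _
  obtain ⟨i, rfl⟩ := hu.surjective x
  obtain ⟨j, rfl⟩ := hu.surjective y
  have hij : i ≠ j := fun h => hxy (congrArg u h)
  rcases Nat.lt_or_ge (i : ℕ) (j : ℕ) with h | h
  · exact main i j h
  · have hlt : (j : ℕ) < (i : ℕ) := by
      rcases Nat.lt_or_ge (j : ℕ) (i : ℕ) with h' | h'
      · exact h'
      · exact absurd (Fin.ext (le_antisymm h' h)) hij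
    have := main j i hlt
    rw [SimpleGraph.dist_comm, abs_sub_comm]
    exact this
end
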